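/- Hoeffding bound for sampling without replacement of bounded attention scores (Step 1 of Theorem 4.1): Let C ≥ 1, ε ∈ (0,1], 1 ≤ M ≤ N, and let a_1,…,a_N ∈ [1/C, C]. Let τ be a uniformly random permutation of {1,…,N}. Then Pr[ |(N/M)·∑_{j=1}^{M} a_{τ(j)} − ∑_{j=1}^{N} a_j| ≥ (ε/4)·∑_{j=1}^{N} a_j ] ≤ 2·exp(−ε²M/(8C⁴)). -/

import Mathlib

set_option maxHeartbeats 1000000

open Matrix Finset

lemma tangent_pow (m : ℕ) {x y : ℝ} (hx : 0 ≤ x) (hy : 0 ≤ y) :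
    y ^ (m+1) + ((m:ℝ)+1) * y ^ m * (x - y) ≤ x ^ (m+1) := by
  have hgeom : (∑ i ∈ range (m+1), x ^ i * y ^ (m - i)) * (x - y) = x ^ (m+1) - y ^ (m+1) := by
    simpa using geom_sum₂_mul x y (m+1)
  have hconst : ∑ i ∈ range (m+1), (y:ℝ) ^ m = ((m:ℝ)+1) * y ^ m := by
    rw [Finset.sum_const, card_range]; push_cast; ring
  have key : ((m:ℝ)+1) * y ^ m * (x - y) ≤ x ^ (m+1) - y ^ (m+1) := by
    rw [← hgeom, ← hconst]
    rcases le_total y x with h | h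
    · apply mul_le_mul_of_nonneg_right _ (sub_nonneg.2 h)
      apply Finset.sum_le_sum
      intro i hi
      have him := Finset.mem_range.1 hi
      have : (y:ℝ) ^ m = y ^ i * y ^ (m - i) := by
        rw [← pow_add]; congr 1; omega
      rw [this]
      exact mul_le_mul_of_nonneg_right (pow_le_pow_left₀ hy h i) (pow_nonneg hy _)
    · rw [← neg_le_neg_iff, ← mul_neg, ← mul_neg]
      apply mul_le_mul_of_nonneg_right _ (by linarith)
      apply Finset.sum_le_sum
      intro i hi
      have him := Finset.mem_range.1 hi
      have : (y:ℝ) ^ m = y ^ i * y ^ (m - i) := by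
        rw [← pow_add]; congr 1; omega
      rw [this]
      exact mul_le_mul_of_nonneg_right (pow_le_pow_left₀ hx h i) (pow_nonneg hy _)
  linarith



lemma maclaurin {ι : Type*} [DecidableEq ι] (s : Finset ι) (g : ι → ℝ)
    (hg : ∀ i ∈ s, 0 ≤ g i) (M : ℕ) :
    ∑ A ∈ s.powersetCard M, ∏ i ∈ A, g i
      ≤ (s.card.choose M) * ((∑ i ∈ s, g i) / s.card) ^ M := by
  induction s using Finset.cons_induction generalizing M with
  | empty =>
      cases M with
      | zero => simp
      | succ m =>
          rw [Finset.powersetCard_eq_empty.2 (by simp)]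
          simp
  | cons x s hx ih =>
      have hgx : 0 ≤ g x := hg x (mem_cons_self x s)
      have hgs : ∀ i ∈ s, 0 ≤ g i := fun i hi => hg i (mem_cons_of_mem hi)
      cases M with
      | zero => simp
      | succ m =>
        have hdisj : Disjoint (s.powersetCard (m+1)) ((s.powersetCard m).image (insert x)) := by
          rw [Finset.disjoint_left]
          rintro A hA hA'
          obtain ⟨B, hB, rfl⟩ := Finset.mem_image.1 hA'
          exact hx ((Finset.mem_powersetCard.1 hA).1 (Finset.mem_insert_self x B))
        rw [Finset.cons_eq_insert, Finset.powersetCard_succ_insert hx,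
            Finset.sum_union hdisj,
            Finset.sum_image (fun A hA B hB h => ?inj)]
        case inj =>
          have hxA : x ∉ A := fun hc => hx ((Finset.mem_powersetCard.1 hA).1 hc)
          have hxB : x ∉ B := fun hc => hx ((Finset.mem_powersetCard.1 hB).1 hc)
          rw [← Finset.erase_insert hxA, ← Finset.erase_insert hxB, h]
        have hprod : ∀ A ∈ s.powersetCard m, ∏ i ∈ insert x A, g i = g x * ∏ i ∈ A, g i := by
          intro A hA
          rw [Finset.prod_insert (fun hc => hx ((Finset.mem_powersetCard.1 hA).1 hc))]
        rw [Finset.sum_congr rfl hprod, ← Finset.mul_sum,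
            Finset.card_insert_of_notMem hx, Finset.sum_insert hx]
        rcases Nat.eq_zero_or_pos s.card with hn | hn
        · obtain rfl := Finset.card_eq_zero.1 hn
          cases m with
          | zero =>
              rw [Finset.powersetCard_eq_empty.2 (by simp)]
              simp
          | succ k =>
            rw [Finset.powersetCard_eq_empty.2 (by simp),
                Finset.powersetCard_eq_empty.2 (by simp)]
            have h1 : Nat.choose 1 (k+2) = 0 := Nat.choose_eq_zero_of_lt (by omega)
            simp [h1]
        · set n := s.card with hndef
          set Asum := ∑ i ∈ s, g i with hAsum
          have hA0 : 0 ≤ Asum := Finset.sum_nonneg hgs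
          set t := g x with ht
          have hn0 : (n:ℝ) ≠ 0 := Nat.cast_ne_zero.2 (by omega)
          have hnpos : (0:ℝ) < n := by positivity
          set y := Asum / (n:ℝ) with hydef
          set x' := (t + Asum) / ((n:ℝ)+1) with hxdef
          have hy0 : 0 ≤ y := by positivity
          have hx'0 : 0 ≤ x' := by positivity
          have htan := tangent_pow m hx'0 hy0
          have h1 : (((n+1).choose (m+1) : ℕ) : ℝ)
              = ((n.choose (m+1) : ℕ) : ℝ) + ((n.choose m : ℕ) : ℝ) := by
            rw [Nat.choose_succ_succ]
            push_cast
            ring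
          have h2 : ((m:ℝ)+1) * (((n+1).choose (m+1) : ℕ) : ℝ)
              = ((n:ℝ)+1) * ((n.choose m : ℕ) : ℝ) := by
            have h := Nat.add_one_mul_choose_eq n m
            have h' : ((Nat.succ n * n.choose m : ℕ) : ℝ)
                = ((Nat.succ n).choose (Nat.succ m) * Nat.succ m : ℕ) := by exact_mod_cast h
            push_cast at h'
            linarith
          have hny : (n:ℝ) * y = Asum := by
            rw [hydef]; field_simp
          have hnx : ((n:ℝ)+1) * x' = t + Asum := by
            rw [hxdef]; field_simp
          have heq : (((n+1).choose (m+1) : ℕ) : ℝ) * (y^(m+1) + ((m:ℝ)+1) * y^m * (x' - y))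
              = ((n.choose (m+1) : ℕ) : ℝ) * y^(m+1) + t * (((n.choose m : ℕ) : ℝ) * y^m) := by
            linear_combination (y^(m+1)) * h1 + (y^m*(x'-y)) * h2
              + (((n.choose m : ℕ) : ℝ)*y^m) * hnx - (((n.choose m : ℕ) : ℝ)*y^m) * hny
          have hfin : ((n.choose (m+1) : ℕ) : ℝ) * y^(m+1) + t * (((n.choose m : ℕ) : ℝ) * y^m)
              ≤ (((n+1).choose (m+1) : ℕ) : ℝ) * x'^(m+1) := by
            rw [← heq]
            exact mul_le_mul_of_nonneg_left htan (Nat.cast_nonneg _)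
          push_cast
          push_cast at hfin
          calc ∑ A ∈ s.powersetCard (m+1), ∏ i ∈ A, g i + t * ∑ A ∈ s.powersetCard m, ∏ i ∈ A, g i
              ≤ ((n.choose (m+1) : ℕ) : ℝ) * y^(m+1) + t * (((n.choose m : ℕ) : ℝ) * y^m) := by
                push_cast
                exact add_le_add (ih hgs (m+1)) (mul_le_mul_of_nonneg_left (ih hgs m) hgx)
          _ ≤ (((n+1).choose (m+1) : ℕ) : ℝ) * x'^(m+1) := hfin
          _ = _ := by push_cast [hxdef]; ring

lemma exists_perm_image {α : Type*} [Fintype α] [DecidableEq α] {A B : Finset α}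
    (h : A.card = B.card) : ∃ π : Equiv.Perm α, A.image π = B := by
  have hc : Aᶜ.card = Bᶜ.card := by
    rw [Finset.card_compl, Finset.card_compl, h]
  let e1 : {x // x ∈ A} ≃ {x // x ∈ B} := Finset.equivOfCardEq h
  let e2 : {x // x ∈ Aᶜ} ≃ {x // x ∈ Bᶜ} := Finset.equivOfCardEq hc
  let cA : {x // ¬ x ∈ A} ≃ {x // x ∈ Aᶜ} :=
    Equiv.subtypeEquivRight (fun x => (Finset.mem_compl).symm)
  let cB : {x // ¬ x ∈ B} ≃ {x // x ∈ Bᶜ} :=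
    Equiv.subtypeEquivRight (fun x => (Finset.mem_compl).symm)
  let π : Equiv.Perm α :=
    (Equiv.sumCompl (· ∈ A)).symm.trans
      ((e1.sumCongr ((cA.trans e2).trans cB.symm)).trans (Equiv.sumCompl (· ∈ B)))
  refine ⟨π, ?_⟩
  apply Finset.eq_of_subset_of_card_le
  · intro b hb
    obtain ⟨a, ha, rfl⟩ := Finset.mem_image.1 hb
    have : π a = (e1 ⟨a, ha⟩ : α) := by
      simp only [π, Equiv.trans_apply, Equiv.sumCompl_symm_apply_of_pos ha,
        Equiv.sumCongr_apply, Sum.map_inl, Equiv.sumCompl_apply_inl]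
    rw [this]
    exact (e1 ⟨a, ha⟩).2
  · rw [Finset.card_image_of_injective _ π.injective, h]





lemma fiber_card_eq {α : Type*} [Fintype α] [DecidableEq α] (J A B : Finset α)
    (h : A.card = B.card) :
    (univ.filter fun τ : Equiv.Perm α => J.image τ = A).card
      = (univ.filter fun τ : Equiv.Perm α => J.image τ = B).card := by
  obtain ⟨π, hπ⟩ := exists_perm_image h
  have himg : (univ.filter fun τ : Equiv.Perm α => J.image τ = B)
      = (univ.filter fun τ : Equiv.Perm α => J.image τ = A).image (fun τ => π * τ) := by
    ext σ
    simp only [Finset.mem_image, Finset.mem_filter, Finset.mem_univ, true_and]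
    constructor
    · intro hσ
      refine ⟨π⁻¹ * σ, ?_, by group⟩
      have : J.image ⇑(π⁻¹ * σ) = (J.image ⇑σ).image ⇑π⁻¹ := by
        rw [Finset.image_image]; rfl
      rw [this, hσ, ← hπ, Finset.image_image]
      have hid : ⇑π⁻¹ ∘ ⇑π = id := by
        funext x; simp
      rw [hid, Finset.image_id]
    · rintro ⟨τ, hτ, rfl⟩
      have : J.image ⇑(π * τ) = (J.image ⇑τ).image ⇑π := by
        rw [Finset.image_image]; rfl
      rw [this, hτ, hπ]
  rw [himg, Finset.card_image_of_injective _ (mul_right_injective π)]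

lemma perm_sum {N M : ℕ} (hMN : M ≤ N) (g : Fin N → ℝ) (hg : ∀ i, 0 ≤ g i) :
    ∑ τ : Equiv.Perm (Fin N), ∏ j ∈ univ.filter (fun j : Fin N => (j:ℕ) < M), g (τ j)
      ≤ (Fintype.card (Equiv.Perm (Fin N)) : ℝ) * ((∑ i, g i) / N) ^ M := by
  set J := univ.filter (fun j : Fin N => (j:ℕ) < M) with hJ
  have hJcard : J.card = M := by
    have : J = (Finset.range M).attachFin (fun m hm => lt_of_lt_of_le (mem_range.1 hm) hMN) := by
      ext j
      simp [hJ, Finset.mem_attachFin]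
    rw [this, Finset.card_attachFin, Finset.card_range]
  have hmaps : ∀ τ : Equiv.Perm (Fin N), J.image τ ∈ (univ : Finset (Fin N)).powersetCard M :=
    fun τ => Finset.mem_powersetCard.2 ⟨Finset.subset_univ _,
      by rw [Finset.card_image_of_injective _ τ.injective, hJcard]⟩
  set K := (univ.filter fun τ : Equiv.Perm (Fin N) => J.image τ = J).card with hK
  have hfibK : ∀ A ∈ (univ : Finset (Fin N)).powersetCard M,
      (univ.filter fun τ : Equiv.Perm (Fin N) => J.image τ = A).card = K := by
    intro A hA
    exact fiber_card_eq J A J (by rw [(Finset.mem_powersetCard.1 hA).2, hJcard])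
  have hsum : ∑ τ : Equiv.Perm (Fin N), ∏ j ∈ J, g (τ j)
      = ∑ A ∈ (univ : Finset (Fin N)).powersetCard M,
          ∑ τ ∈ univ.filter (fun τ : Equiv.Perm (Fin N) => J.image τ = A), ∏ j ∈ J, g (τ j) :=
    (Finset.sum_fiberwise_of_maps_to (fun τ _ => hmaps τ) _).symm
  have hinner : ∀ A ∈ (univ : Finset (Fin N)).powersetCard M,
      ∑ τ ∈ univ.filter (fun τ : Equiv.Perm (Fin N) => J.image τ = A), ∏ j ∈ J, g (τ j)
        = (K : ℝ) * ∏ i ∈ A, g i := by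
    intro A hA
    have : ∀ τ ∈ univ.filter (fun τ : Equiv.Perm (Fin N) => J.image τ = A),
        ∏ j ∈ J, g (τ j) = ∏ i ∈ A, g i := by
      intro τ hτ
      have hτA : J.image τ = A := (Finset.mem_filter.1 hτ).2
      rw [← hτA, Finset.prod_image (fun x _ y _ h => τ.injective h)]
    rw [Finset.sum_congr rfl this, Finset.sum_const, ← hfibK A hA, nsmul_eq_mul]
  have hcardperm : (Fintype.card (Equiv.Perm (Fin N)) : ℕ) = N.choose M * K := by
    have h1 : (univ : Finset (Equiv.Perm (Fin N))).card
        = ∑ A ∈ (univ : Finset (Fin N)).powersetCard M,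
            (univ.filter fun τ : Equiv.Perm (Fin N) => J.image τ = A).card :=
      Finset.card_eq_sum_card_fiberwise (fun τ _ => hmaps τ)
    rw [← Finset.card_univ, h1, Finset.sum_congr rfl hfibK, Finset.sum_const,
        Finset.card_powersetCard, Finset.card_univ, Fintype.card_fin, smul_eq_mul]
  calc ∑ τ : Equiv.Perm (Fin N), ∏ j ∈ J, g (τ j)
      = (K : ℝ) * ∑ A ∈ (univ : Finset (Fin N)).powersetCard M, ∏ i ∈ A, g i := by
        rw [hsum, Finset.sum_congr rfl hinner, ← Finset.mul_sum]
    _ ≤ (K : ℝ) * ((N.choose M : ℝ) * ((∑ i, g i) / N) ^ M) := by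
        apply mul_le_mul_of_nonneg_left _ (Nat.cast_nonneg K)
        have := maclaurin (univ : Finset (Fin N)) g (fun i _ => hg i) M
        rwa [Finset.card_univ, Fintype.card_fin] at this
    _ = (Fintype.card (Equiv.Perm (Fin N)) : ℝ) * ((∑ i, g i) / N) ^ M := by
        rw [hcardperm]
        push_cast
        ring

lemma taylor_exp {u : ℝ} (hu : |u| ≤ 1) : Real.exp u ≤ 1 + u + (3/4) * u^2 := by
  have h := Real.exp_bound hu (n := 2) (by norm_num)
  have h2 : ∑ i ∈ Finset.range 2, u ^ i / (Nat.factorial i) = 1 + u := by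
    simp [Finset.sum_range_succ]
  rw [h2] at h
  have habs := (abs_le.1 h).2
  have : |u| ^ 2 * ((3:ℝ) / (2 * 2)) = (3/4) * u^2 := by
    rw [sq_abs]; ring
  norm_num at habs
  nlinarith [sq_abs u]

lemma mgf_avg {N : ℕ} (hN : 0 < N) (C : ℝ) (hC : 1 ≤ C) (a : Fin N → ℝ)
    (ha : ∀ j, 1/C ≤ a j ∧ a j ≤ C) (lam μ : ℝ) (hμ : μ = (∑ j, a j) / N)
    (hlam : |lam| ≤ 1/C) :
    (∑ i, Real.exp (lam * (a i - μ)))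
      ≤ N * Real.exp ((3/4) * lam^2 * ((C - μ) * (μ - 1/C))) := by
  have hC0 : (0:ℝ) < C := lt_of_lt_of_le zero_lt_one hC
  have hN0 : (0:ℝ) < N := by exact_mod_cast hN
  have hNμ : (N:ℝ) * μ = ∑ j, a j := by
    rw [hμ]; field_simp
  have hμlb : 1/C ≤ μ := by
    rw [hμ, le_div_iff₀ hN0]
    calc 1/C * N = ∑ _j : Fin N, (1/C : ℝ) := by
          rw [Finset.sum_const, Finset.card_univ, Fintype.card_fin, nsmul_eq_mul]; ring
    _ ≤ ∑ j, a j := Finset.sum_le_sum (fun j _ => (ha j).1)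
  have hμub : μ ≤ C := by
    rw [hμ, div_le_iff₀ hN0]
    calc ∑ j, a j ≤ ∑ _j : Fin N, C := Finset.sum_le_sum (fun j _ => (ha j).2)
    _ = C * N := by
          rw [Finset.sum_const, Finset.card_univ, Fintype.card_fin, nsmul_eq_mul]; ring
  set v : ℝ := (C - μ) * (μ - 1/C) with hv
  have hpt : ∀ i, Real.exp (lam * (a i - μ)) ≤
      1 + lam * (a i - μ) + (3/4) * (lam * (a i - μ))^2 := by
    intro i
    apply taylor_exp
    rw [abs_mul]
    have h1 : |a i - μ| ≤ C - 1/C := by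
      rw [abs_le]
      constructor
      · linarith [(ha i).1]
      · linarith [(ha i).2]
    have h2 : (0:ℝ) ≤ C - 1/C := by
      have : 1/C ≤ C := by
        rw [div_le_iff₀ hC0]; nlinarith
      linarith
    calc |lam| * |a i - μ| ≤ (1/C) * (C - 1/C) :=
          mul_le_mul hlam h1 (abs_nonneg _) (by positivity)
    _ = 1 - 1/C^2 := by field_simp
    _ ≤ 1 := by
          have : (0:ℝ) < 1/C^2 := by positivity
          linarith
  have hsq : ∑ i, (a i - μ)^2 ≤ N * v := by
    have h1 : ∀ i : Fin N, (a i - μ)^2 ≤ (C + 1/C) * a i - 1 - 2*μ*(a i) + μ^2 := by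
      intro i
      have := mul_nonneg (sub_nonneg.2 (ha i).2) (sub_nonneg.2 (ha i).1)
      have hCi : (C - a i) * (a i - 1/C) = (C + 1/C) * a i - 1 - (a i)^2 := by
        field_simp; ring
      nlinarith
    calc ∑ i, (a i - μ)^2 ≤ ∑ i, ((C + 1/C) * a i - 1 - 2*μ*(a i) + μ^2) :=
          Finset.sum_le_sum (fun i _ => h1 i)
    _ = (C + 1/C) * ((N:ℝ)*μ) - N - 2*μ*((N:ℝ)*μ) + N*μ^2 := by
          rw [Finset.sum_add_distrib, Finset.sum_sub_distrib, Finset.sum_sub_distrib,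
              ← Finset.mul_sum, ← Finset.mul_sum, hNμ, Finset.sum_const, Finset.sum_const,
              Finset.card_univ, Fintype.card_fin, nsmul_eq_mul, nsmul_eq_mul]
          ring
    _ = N * v := by rw [hv]; field_simp; ring
  calc ∑ i, Real.exp (lam * (a i - μ))
      ≤ ∑ i, (1 + lam * (a i - μ) + (3/4) * (lam * (a i - μ))^2) :=
        Finset.sum_le_sum (fun i _ => hpt i)
    _ = (N:ℝ) + lam * ((∑ j, a j) - N*μ) + (3/4) * lam^2 * ∑ i, (a i - μ)^2 := by
        have hterm : ∀ i ∈ (univ : Finset (Fin N)),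
            (3:ℝ)/4 * (lam * (a i - μ))^2 = 3/4 * lam^2 * (a i - μ)^2 := fun i _ => by ring
        rw [Finset.sum_add_distrib, Finset.sum_add_distrib, Finset.sum_const,
            Finset.card_univ, Fintype.card_fin, nsmul_eq_mul, ← Finset.mul_sum,
            Finset.sum_sub_distrib, Finset.sum_const, Finset.card_univ, Fintype.card_fin,
            nsmul_eq_mul, Finset.sum_congr rfl hterm, ← Finset.mul_sum]
        ring
    _ ≤ (N:ℝ) + 0 + (3/4) * lam^2 * (N * v) := by
        have h0 : (∑ j, a j) - (N:ℝ)*μ = 0 := by rw [hNμ]; ring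
        rw [h0, mul_zero]
        have : (0:ℝ) ≤ (3/4) * lam^2 := by positivity
        gcongr
    _ ≤ N * Real.exp ((3/4) * lam^2 * v) := by
        have h1 : (3/4) * lam^2 * v + 1 ≤ Real.exp ((3/4) * lam^2 * v) :=
          Real.add_one_le_exp _
        nlinarith [hN0]

lemma lambda_choice (C ε μ : ℝ) (hC : 1 ≤ C) (hε : 0 < ε) (hε1 : ε ≤ 1)
    (hμlb : 1/C ≤ μ) (hμub : μ ≤ C) :
    ∃ lam : ℝ, 0 ≤ lam ∧ lam ≤ 1/C ∧
      ε^2 / (8 * C^4) ≤ lam * (ε * μ / 4) - (3/4) * lam^2 * ((C - μ) * (μ - 1/C)) := by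
  have hC0 : (0:ℝ) < C := lt_of_lt_of_le zero_lt_one hC
  have hμ0 : (0:ℝ) < μ := lt_of_lt_of_le (by positivity) hμlb
  set v : ℝ := (C - μ) * (μ - 1/C) with hv
  have hv0 : 0 ≤ v := mul_nonneg (by linarith) (by linarith)
  rcases le_or_gt v (ε * μ * C / 6) with hcase | hcase
  · refine ⟨1/C, by positivity, le_refl _, ?_⟩
    have h1 : (3/4) * (1/C)^2 * v ≤ (3/4) * (1/C)^2 * (ε * μ * C / 6) :=
      mul_le_mul_of_nonneg_left hcase (by positivity)
    have h2 : (1/C) * (ε * μ / 4) - (3/4) * (1/C)^2 * (ε * μ * C / 6) = ε * μ / (8*C) := by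
      field_simp
      ring
    have hμC : 1 ≤ μ * C := by
      calc (1:ℝ) = 1/C * C := by field_simp
      _ ≤ μ * C := mul_le_mul_of_nonneg_right hμlb (le_of_lt hC0)
    have hμC3 : 1 ≤ μ * C^3 := by nlinarith [sq_nonneg C]
    have h3 : ε^2 / (8 * C^4) ≤ ε * μ / (8*C) := by
      rw [div_le_div_iff₀ (by positivity) (by positivity)]
      nlinarith [mul_pos hε hC0, mul_le_mul_of_nonneg_left hμC3 (le_of_lt (mul_pos (mul_pos hε hε) hC0))]
    linarith
  · have hv0' : 0 < v := lt_of_le_of_lt (by positivity) hcase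
    refine ⟨ε * μ / (6 * v), by positivity, ?_, ?_⟩
    · rw [div_le_div_iff₀ (by positivity) hC0]
      nlinarith
    · have hval : (ε * μ / (6 * v)) * (ε * μ / 4) - (3/4) * (ε * μ / (6 * v))^2 * v
          = ε^2 * μ^2 / (48 * v) := by
        field_simp
        ring
      rw [hval, div_le_div_iff₀ (by positivity) (by positivity)]
      have hident : μ^2*(C - 1/C)^2 - (μ*(C + 1/C) - 2)^2 = 4*v := by
        rw [hv]; field_simp; ring
      have hs1 : 4 * v ≤ μ^2 * (C - 1/C)^2 := by
        nlinarith [sq_nonneg (μ*(C + 1/C) - 2)]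
      have hx : (1:ℝ) ≤ C^2 := by nlinarith
      have hx4 : (1:ℝ) ≤ C^4 := by nlinarith
      have hcube : (0:ℝ) ≤ (C^2 - 1)^2 * (C^2 - 1) := mul_nonneg (sq_nonneg _) (by linarith)
      have hpoly : 3*(C^2 - 1)^2 ≤ 2*C^6 := by nlinarith [hcube, hx4]
      have hCC : (C - 1/C)^2 * C^2 = (C^2 - 1)^2 := by field_simp
      have hs2 : 3 * (C - 1/C)^2 ≤ 2 * C^4 := by
        have hC2 : (0:ℝ) < C^2 := by positivity
        have e1 : 3 * (C - 1/C)^2 * C^2 = 3*(C^2 - 1)^2 := by linear_combination 3 * hCC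
        have h6 : 3 * (C - 1/C)^2 * C^2 ≤ 2 * C^4 * C^2 := by
          rw [e1]
          calc 3*(C^2 - 1)^2 ≤ 2*C^6 := hpoly
          _ = 2 * C^4 * C^2 := by ring
        exact le_of_mul_le_mul_right h6 hC2
      have hm : μ^2 * (3 * (C - 1/C)^2) ≤ μ^2 * (2 * C^4) :=
        mul_le_mul_of_nonneg_left hs2 (sq_nonneg μ)
      have key : 6 * v ≤ μ^2 * C^4 := by
        calc 6*v = (3/2) * (4*v) := by ring
        _ ≤ (3/2) * (μ^2 * (C - 1/C)^2) := by linarith [hs1]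
        _ = (1/2) * (μ^2 * (3*(C - 1/C)^2)) := by ring
        _ ≤ (1/2) * (μ^2 * (2*C^4)) := by linarith [hm]
        _ = μ^2 * C^4 := by ring
      have hfin := mul_le_mul_of_nonneg_left key (show (0:ℝ) ≤ 8 * ε^2 by positivity)
      calc ε^2 * (48 * v) = 8 * ε^2 * (6 * v) := by ring
      _ ≤ 8 * ε^2 * (μ^2 * C^4) := hfin
      _ = ε^2 * μ^2 * (8 * C^4) := by ring



lemma chernoff_count {N M : ℕ} (hMN : M ≤ N) (b : Fin N → ℝ) (s₀ : ℝ) :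
    ((univ.filter (fun τ : Equiv.Perm (Fin N) =>
        s₀ ≤ ∑ j ∈ univ.filter (fun j : Fin N => (j:ℕ) < M), b (τ j))).card : ℝ)
      ≤ Real.exp (-s₀) * ((Fintype.card (Equiv.Perm (Fin N)) : ℝ)
          * ((∑ i, Real.exp (b i)) / N) ^ M) := by
  set J := univ.filter (fun j : Fin N => (j:ℕ) < M) with hJ
  set E := univ.filter (fun τ : Equiv.Perm (Fin N) => s₀ ≤ ∑ j ∈ J, b (τ j)) with hE
  have h1 : (E.card : ℝ) ≤ ∑ τ ∈ E, Real.exp ((∑ j ∈ J, b (τ j)) - s₀) := by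
    rw [Finset.card_eq_sum_ones E]
    push_cast
    apply Finset.sum_le_sum
    intro τ hτ
    exact Real.one_le_exp (sub_nonneg.2 (Finset.mem_filter.1 hτ).2)
  have h2 : ∑ τ ∈ E, Real.exp ((∑ j ∈ J, b (τ j)) - s₀)
      ≤ ∑ τ : Equiv.Perm (Fin N), Real.exp ((∑ j ∈ J, b (τ j)) - s₀) :=
    Finset.sum_le_sum_of_subset_of_nonneg (Finset.subset_univ E)
      (fun τ _ _ => le_of_lt (Real.exp_pos _))
  have h3 : ∀ τ : Equiv.Perm (Fin N), Real.exp ((∑ j ∈ J, b (τ j)) - s₀)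
      = Real.exp (-s₀) * ∏ j ∈ J, Real.exp (b (τ j)) := by
    intro τ
    rw [Real.exp_sub, Real.exp_sum, Real.exp_neg]
    ring
  have h4 := perm_sum hMN (fun i => Real.exp (b i)) (fun i => le_of_lt (Real.exp_pos _))
  calc (E.card : ℝ) ≤ ∑ τ : Equiv.Perm (Fin N), Real.exp ((∑ j ∈ J, b (τ j)) - s₀) :=
        le_trans h1 h2
  _ = Real.exp (-s₀) * ∑ τ : Equiv.Perm (Fin N), ∏ j ∈ J, Real.exp (b (τ j)) := by
        rw [Finset.sum_congr rfl (fun τ _ => h3 τ), ← Finset.mul_sum]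
  _ ≤ Real.exp (-s₀) * ((Fintype.card (Equiv.Perm (Fin N)) : ℝ)
          * ((∑ i, Real.exp (b i)) / N) ^ M) := by
        apply mul_le_mul_of_nonneg_left _ (le_of_lt (Real.exp_pos _))
        exact h4

/-- Hoeffding bound for sampling without replacement of bounded attention
scores: for `a_j ∈ [1/C, C]` and a uniformly random permutation `τ` of
`{1,…,N}`, the probability (counting measure ratio over all permutations) that
the rescaled sample `(N/M)·∑_{j=1}^M a_{τ(j)}` deviates from `∑_j a_j` by at
least `(ε/4)·∑_j a_j` is at most `2·exp(-ε²M/(8C⁴))`. -/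
theorem hoeffding_without_replacement_scores {N M : ℕ} (hM : 1 ≤ M) (hMN : M ≤ N)
    (C ε : ℝ) (hC : 1 ≤ C) (hε : 0 < ε) (hε1 : ε ≤ 1)
    (a : Fin N → ℝ) (ha : ∀ j, 1 / C ≤ a j ∧ a j ≤ C) :
    ((Finset.univ.filter (fun τ : Equiv.Perm (Fin N) =>
        ε / 4 * ∑ j, a j ≤
          |(N : ℝ) / M * ∑ j ∈ Finset.univ.filter (fun j : Fin N => (j : ℕ) < M), a (τ j)
            - ∑ j, a j|)).card : ℝ)
      / (Fintype.card (Equiv.Perm (Fin N)) : ℝ)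
    ≤ 2 * Real.exp (-(ε ^ 2 * M) / (8 * C ^ 4)) := by
  classical
  have hN : 0 < N := lt_of_lt_of_le hM hMN
  have hC0 : (0:ℝ) < C := lt_of_lt_of_le zero_lt_one hC
  have hN0 : (0:ℝ) < (N:ℝ) := by exact_mod_cast hN
  have hM0 : (0:ℝ) < (M:ℝ) := by exact_mod_cast hM
  set J := univ.filter (fun j : Fin N => (j:ℕ) < M) with hJ
  set T := ∑ j, a j with hT
  set μ := T / N with hμdef
  have hNμ : (N:ℝ) * μ = T := by rw [hμdef]; field_simp
  have hμlb : 1/C ≤ μ := by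
    rw [hμdef, le_div_iff₀ hN0]
    calc 1/C * N = ∑ _j : Fin N, (1/C : ℝ) := by
          rw [Finset.sum_const, Finset.card_univ, Fintype.card_fin, nsmul_eq_mul]; ring
    _ ≤ T := Finset.sum_le_sum (fun j _ => (ha j).1)
  have hμub : μ ≤ C := by
    rw [hμdef, div_le_iff₀ hN0]
    calc T ≤ ∑ _j : Fin N, C := Finset.sum_le_sum (fun j _ => (ha j).2)
    _ = C * N := by
          rw [Finset.sum_const, Finset.card_univ, Fintype.card_fin, nsmul_eq_mul]; ring
  have hμ0 : (0:ℝ) < μ := lt_of_lt_of_le (by positivity) hμlb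
  obtain ⟨lam, hlam0, hlamC, hlam3⟩ := lambda_choice C ε μ hC hε hε1 hμlb hμub
  set v : ℝ := (C - μ) * (μ - 1/C) with hv
  set t : ℝ := ε * μ / 4 with htdef
  have ht0 : 0 < t := by rw [htdef]; positivity
  set P : ℕ := Fintype.card (Equiv.Perm (Fin N)) with hP
  have hP0 : (0:ℝ) < P := by
    have : 0 < P := Fintype.card_pos
    exact_mod_cast this
  have hlamabs : |lam| ≤ 1/C := by
    rw [abs_le]; constructor
    · linarith [hlam0]; 
    · exact hlamC
  set U := univ.filter (fun τ : Equiv.Perm (Fin N) => (M:ℝ)*(μ + t) ≤ ∑ j ∈ J, a (τ j)) with hU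
  set L := univ.filter (fun τ : Equiv.Perm (Fin N) => ∑ j ∈ J, a (τ j) ≤ (M:ℝ)*(μ - t)) with hL
  -- event is contained in U ∪ L
  have hsub : (Finset.univ.filter (fun τ : Equiv.Perm (Fin N) =>
        ε / 4 * T ≤ |(N : ℝ) / M * ∑ j ∈ J, a (τ j) - T|)) ⊆ U ∪ L := by
    intro τ hτ
    have hcond := (Finset.mem_filter.1 hτ).2
    rw [Finset.mem_union]
    have hTe : T = (N:ℝ) * μ := hNμ.symm
    rcases le_abs.1 hcond with h | h
    · left
      rw [hU, Finset.mem_filter]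
      refine ⟨Finset.mem_univ _, ?_⟩
      have h1 : T * (1 + ε/4) ≤ (N:ℝ)/M * ∑ j ∈ J, a (τ j) := by linarith
      have h2 : (M:ℝ)*(μ + t) = (M:ℝ)/N * (T * (1 + ε/4)) := by
        rw [hTe, htdef]; field_simp
      have h3 : (M:ℝ)/N * ((N:ℝ)/M * ∑ j ∈ J, a (τ j)) = ∑ j ∈ J, a (τ j) := by
        field_simp
      calc (M:ℝ)*(μ + t) = (M:ℝ)/N * (T * (1 + ε/4)) := h2
      _ ≤ (M:ℝ)/N * ((N:ℝ)/M * ∑ j ∈ J, a (τ j)) :=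
            mul_le_mul_of_nonneg_left h1 (by positivity)
      _ = ∑ j ∈ J, a (τ j) := h3
    · right
      rw [hL, Finset.mem_filter]
      refine ⟨Finset.mem_univ _, ?_⟩
      have h1 : (N:ℝ)/M * ∑ j ∈ J, a (τ j) ≤ T * (1 - ε/4) := by linarith
      have h2 : (M:ℝ)*(μ - t) = (M:ℝ)/N * (T * (1 - ε/4)) := by
        rw [hTe, htdef]; field_simp
      have h3 : (M:ℝ)/N * ((N:ℝ)/M * ∑ j ∈ J, a (τ j)) = ∑ j ∈ J, a (τ j) := by
        field_simp
      calc ∑ j ∈ J, a (τ j) = (M:ℝ)/N * ((N:ℝ)/M * ∑ j ∈ J, a (τ j)) := h3.symm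
      _ ≤ (M:ℝ)/N * (T * (1 - ε/4)) := mul_le_mul_of_nonneg_left h1 (by positivity)
      _ = (M:ℝ)*(μ - t) := h2.symm
  -- per-unit exponent bound
  have hexp1 : ε^2 / (8 * C^4) ≤ lam * t - (3/4) * lam^2 * v := by
    rw [htdef, hv]; exact hlam3
  -- Upper tail
  have hUbound : (U.card : ℝ) ≤ (P:ℝ) * Real.exp (-((M:ℝ) * (lam * t - (3/4) * lam^2 * v))) := by
    have hsubU : U ⊆ univ.filter (fun τ : Equiv.Perm (Fin N) =>
        lam * ((M:ℝ)*(μ + t)) ≤ ∑ j ∈ J, (lam * a (τ j))) := by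
      intro τ hτ
      rw [Finset.mem_filter]
      refine ⟨Finset.mem_univ _, ?_⟩
      have hc := (Finset.mem_filter.1 hτ).2
      rw [← Finset.mul_sum]
      exact mul_le_mul_of_nonneg_left hc hlam0
    have hch := chernoff_count (M := M) hMN (fun i => lam * a i) (lam * ((M:ℝ)*(μ + t)))
    have hcard1 : (U.card : ℝ) ≤ ((univ.filter (fun τ : Equiv.Perm (Fin N) =>
        lam * ((M:ℝ)*(μ + t)) ≤ ∑ j ∈ J, (lam * a (τ j)))).card : ℝ) := by
      exact_mod_cast Finset.card_le_card hsubU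
    have hmgf := mgf_avg hN C hC a ha lam μ (by rw [hμdef, hT]) hlamabs
    have hkey : (∑ i, Real.exp (lam * a i)) / N ≤ Real.exp (lam * μ + (3/4) * lam^2 * v) := by
      have hfac : ∀ i : Fin N, Real.exp (lam * a i)
          = Real.exp (lam * μ) * Real.exp (lam * (a i - μ)) := by
        intro i
        rw [← Real.exp_add]
        congr 1
        ring
      rw [Finset.sum_congr rfl (fun i _ => hfac i), ← Finset.mul_sum]
      rw [Real.exp_add]
      rw [div_le_iff₀ hN0]
      calc Real.exp (lam * μ) * ∑ i, Real.exp (lam * (a i - μ))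
          ≤ Real.exp (lam * μ) * ((N:ℝ) * Real.exp ((3/4) * lam^2 * v)) := by
            apply mul_le_mul_of_nonneg_left _ (le_of_lt (Real.exp_pos _))
            rw [hv]; exact hmgf
      _ = Real.exp (lam * μ) * Real.exp ((3/4) * lam^2 * v) * N := by ring
    have hpow : ((∑ i, Real.exp (lam * a i)) / N) ^ M
        ≤ Real.exp ((M:ℝ) * (lam * μ + (3/4) * lam^2 * v)) := by
      have h1 : ((∑ i, Real.exp (lam * a i)) / N) ^ M
          ≤ (Real.exp (lam * μ + (3/4) * lam^2 * v)) ^ M :=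
        pow_le_pow_left₀ (by positivity) hkey M
      rwa [← Real.exp_nat_mul] at h1
    calc (U.card : ℝ)
        ≤ Real.exp (-(lam * ((M:ℝ)*(μ + t)))) * ((P:ℝ) * ((∑ i, Real.exp (lam * a i)) / N) ^ M) :=
          le_trans hcard1 hch
    _ ≤ Real.exp (-(lam * ((M:ℝ)*(μ + t)))) * ((P:ℝ) * Real.exp ((M:ℝ) * (lam * μ + (3/4) * lam^2 * v))) := by
          apply mul_le_mul_of_nonneg_left _ (le_of_lt (Real.exp_pos _))
          exact mul_le_mul_of_nonneg_left hpow (le_of_lt hP0)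
    _ = (P:ℝ) * Real.exp (-((M:ℝ) * (lam * t - (3/4) * lam^2 * v))) := by
          have hexpo : -((M:ℝ) * (lam * t - (3/4) * lam^2 * v))
              = -(lam * ((M:ℝ)*(μ + t))) + (M:ℝ) * (lam * μ + (3/4) * lam^2 * v) := by ring
          rw [hexpo, Real.exp_add]
          ring
  -- Lower tail
  have hLbound : (L.card : ℝ) ≤ (P:ℝ) * Real.exp (-((M:ℝ) * (lam * t - (3/4) * lam^2 * v))) := by
    have hsubL : L ⊆ univ.filter (fun τ : Equiv.Perm (Fin N) =>
        -(lam * ((M:ℝ)*(μ - t))) ≤ ∑ j ∈ J, (-lam * a (τ j))) := by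
      intro τ hτ
      rw [Finset.mem_filter]
      refine ⟨Finset.mem_univ _, ?_⟩
      have hc := (Finset.mem_filter.1 hτ).2
      have : ∑ j ∈ J, (-lam * a (τ j)) = -(lam * ∑ j ∈ J, a (τ j)) := by
        rw [← Finset.mul_sum]; ring
      rw [this]
      have := mul_le_mul_of_nonneg_left hc hlam0
      linarith
    have hch := chernoff_count (M := M) hMN (fun i => -lam * a i) (-(lam * ((M:ℝ)*(μ - t))))
    have hcard1 : (L.card : ℝ) ≤ ((univ.filter (fun τ : Equiv.Perm (Fin N) =>
        -(lam * ((M:ℝ)*(μ - t))) ≤ ∑ j ∈ J, (-lam * a (τ j)))).card : ℝ) := by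
      exact_mod_cast Finset.card_le_card hsubL
    have hmgf := mgf_avg hN C hC a ha (-lam) μ (by rw [hμdef, hT]) (by rwa [abs_neg])
    have hkey : (∑ i, Real.exp (-lam * a i)) / N ≤ Real.exp (-(lam * μ) + (3/4) * lam^2 * v) := by
      have hfac : ∀ i : Fin N, Real.exp (-lam * a i)
          = Real.exp (-(lam * μ)) * Real.exp (-lam * (a i - μ)) := by
        intro i
        rw [← Real.exp_add]
        congr 1
        ring
      rw [Finset.sum_congr rfl (fun i _ => hfac i), ← Finset.mul_sum]
      rw [Real.exp_add]
      rw [div_le_iff₀ hN0]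
      calc Real.exp (-(lam * μ)) * ∑ i, Real.exp (-lam * (a i - μ))
          ≤ Real.exp (-(lam * μ)) * ((N:ℝ) * Real.exp ((3/4) * lam^2 * v)) := by
            apply mul_le_mul_of_nonneg_left _ (le_of_lt (Real.exp_pos _))
            have h := hmgf
            rw [hv]
            have hsq : (-lam)^2 = lam^2 := by ring
            rw [hsq] at h
            exact h
      _ = Real.exp (-(lam * μ)) * Real.exp ((3/4) * lam^2 * v) * N := by ring
    have hpow : ((∑ i, Real.exp (-lam * a i)) / N) ^ M
        ≤ Real.exp ((M:ℝ) * (-(lam * μ) + (3/4) * lam^2 * v)) := by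
      have h1 : ((∑ i, Real.exp (-lam * a i)) / N) ^ M
          ≤ (Real.exp (-(lam * μ) + (3/4) * lam^2 * v)) ^ M :=
        pow_le_pow_left₀ (by positivity) hkey M
      rwa [← Real.exp_nat_mul] at h1
    calc (L.card : ℝ)
        ≤ Real.exp (-(-(lam * ((M:ℝ)*(μ - t))))) * ((P:ℝ) * ((∑ i, Real.exp (-lam * a i)) / N) ^ M) :=
          le_trans hcard1 hch
    _ ≤ Real.exp (lam * ((M:ℝ)*(μ - t))) * ((P:ℝ) * Real.exp ((M:ℝ) * (-(lam * μ) + (3/4) * lam^2 * v))) := by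
          rw [neg_neg]
          apply mul_le_mul_of_nonneg_left _ (le_of_lt (Real.exp_pos _))
          exact mul_le_mul_of_nonneg_left hpow (le_of_lt hP0)
    _ = (P:ℝ) * Real.exp (-((M:ℝ) * (lam * t - (3/4) * lam^2 * v))) := by
          have hexpo : -((M:ℝ) * (lam * t - (3/4) * lam^2 * v))
              = lam * ((M:ℝ)*(μ - t)) + (M:ℝ) * (-(lam * μ) + (3/4) * lam^2 * v) := by ring
          rw [hexpo, Real.exp_add]
          ring
  -- assemble
  have hexpmono : Real.exp (-((M:ℝ) * (lam * t - (3/4) * lam^2 * v)))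
      ≤ Real.exp (-(ε ^ 2 * M) / (8 * C ^ 4)) := by
    apply Real.exp_le_exp.2
    have h1 : (M:ℝ) * (ε^2 / (8 * C^4)) ≤ (M:ℝ) * (lam * t - (3/4) * lam^2 * v) :=
      mul_le_mul_of_nonneg_left hexp1 (le_of_lt hM0)
    have h2 : -(ε ^ 2 * (M:ℝ)) / (8 * C ^ 4) = -((M:ℝ) * (ε^2 / (8 * C^4))) := by ring
    rw [h2]
    linarith
  have hcard : ((Finset.univ.filter (fun τ : Equiv.Perm (Fin N) =>
        ε / 4 * T ≤ |(N : ℝ) / M * ∑ j ∈ J, a (τ j) - T|)).card : ℝ)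
      ≤ (U.card : ℝ) + (L.card : ℝ) := by
    have h1 := Finset.card_le_card hsub
    have h2 := Finset.card_union_le U L
    exact_mod_cast le_trans h1 h2
  rw [div_le_iff₀ hP0]
  calc ((Finset.univ.filter (fun τ : Equiv.Perm (Fin N) =>
        ε / 4 * T ≤ |(N : ℝ) / M * ∑ j ∈ J, a (τ j) - T|)).card : ℝ)
      ≤ (U.card : ℝ) + (L.card : ℝ) := hcard
  _ ≤ (P:ℝ) * Real.exp (-((M:ℝ) * (lam * t - (3/4) * lam^2 * v)))
      + (P:ℝ) * Real.exp (-((M:ℝ) * (lam * t - (3/4) * lam^2 * v))) := add_le_add hUbound hLbound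
  _ = 2 * Real.exp (-((M:ℝ) * (lam * t - (3/4) * lam^2 * v))) * P := by ring
  _ ≤ 2 * Real.exp (-(ε ^ 2 * M) / (8 * C ^ 4)) * P := by
      apply mul_le_mul_of_nonneg_right _ (le_of_lt hP0)
      linarith [hexpmono]
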